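/- Let G be a convex φ-function on [0,∞) such that for every measurable f on [0,1], ‖f‖_{1,G} = ‖f‖_{L¹}. Then G(t) = t for all t ≥ 0. -/

import Mathlib

open MeasureTheory Set

/-- A φ-function: continuous, strictly increasing on `[0,∞)`, `F(0)=0`, `F(1)=1`,
`F(t) → ∞`. -/
structure IsPhiFun (F : ℝ → ℝ) : Prop where
  cont : ContinuousOn F (Ici 0)
  strictMono : StrictMonoOn F (Ici 0)
  zero : F 0 = 0
  one : F 1 = 1
  tendsto : Filter.Tendsto F Filter.atTop Filter.atTop

/-- `F̃(t) = 1/F(1/t)` for `t > 0`, and `F̃(0) = 0`. -/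
noncomputable def phiTilde (F : ℝ → ℝ) (t : ℝ) : ℝ :=
  if 0 < t then (F t⁻¹)⁻¹ else 0

/-- The non-increasing rearrangement of `f` (measured on `[0,1]`). -/
noncomputable def decRearr (f : ℝ → ℝ) (x : ℝ) : ℝ :=
  sSup {t : ℝ | x ≤ (volume {y ∈ Icc (0:ℝ) 1 | t ≤ |f y|}).toReal}

/-- The Luxemburg norm on `[0,1]` associated with `G`. -/
noncomputable def luxNorm (G : ℝ → ℝ) (g : ℝ → ℝ) : ℝ :=
  sInf {c : ℝ | 0 < c ∧ ∫ x in Icc (0:ℝ) 1, G (|g x| / c) ≤ 1}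

/-- The Orlicz–Lorentz functional `‖f‖_{F,G} = ‖ f* ∘ F̃ ∘ G̃⁻¹ ‖_G`. -/
noncomputable def olNorm (F G : ℝ → ℝ) (f : ℝ → ℝ) : ℝ :=
  luxNorm G (fun x => decRearr f (phiTilde F (Function.invFun (phiTilde G) x)))

lemma G_pos {G : ℝ → ℝ} (hG : IsPhiFun G) {t : ℝ} (ht : 0 < t) : 0 < G t := by
  have := hG.strictMono (mem_Ici.2 (le_refl 0)) (mem_Ici.2 (le_of_lt ht)) ht
  rwa [hG.zero] at this

lemma G_mono {G : ℝ → ℝ} (hG : IsPhiFun G) : MonotoneOn G (Ici 0) :=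
  hG.strictMono.monotoneOn

lemma G_surj {G : ℝ → ℝ} (hG : IsPhiFun G) {y : ℝ} (hy : 0 < y) :
    ∃ s, 0 < s ∧ G s = y := by
  obtain ⟨M, hM⟩ := (hG.tendsto.eventually_ge_atTop y).exists_forall_of_atTop
  have hM0 : (0:ℝ) ≤ max M 0 := le_max_right _ _
  have hyM : y ≤ G (max M 0) := hM _ (le_max_left _ _)
  have := intermediate_value_Icc hM0 (hG.cont.mono (fun x hx => hx.1))
  have hy' : y ∈ Icc (G 0) (G (max M 0)) := by
    constructor
    · rw [hG.zero]; exact hy.le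
    · exact hyM
  obtain ⟨s, hs, hseq⟩ := this hy'
  refine ⟨s, ?_, hseq⟩
  rcases lt_or_eq_of_le hs.1 with h | h
  · exact h
  · exfalso; rw [← h, hG.zero] at hseq; exact hy.ne hseq

lemma phiTilde_eq {G : ℝ → ℝ} {t : ℝ} (ht : 0 < t) : phiTilde G t = (G t⁻¹)⁻¹ := if_pos ht

lemma phiTilde_pos {G : ℝ → ℝ} (hG : IsPhiFun G) {t : ℝ} (ht : 0 < t) :
    0 < phiTilde G t := by
  rw [phiTilde_eq ht]
  exact inv_pos.2 (G_pos hG (inv_pos.2 ht))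

lemma phiTilde_strictMono {G : ℝ → ℝ} (hG : IsPhiFun G) :
    StrictMonoOn (phiTilde G) (Ioi 0) := by
  intro a ha b hb hab
  rw [phiTilde_eq ha, phiTilde_eq hb]
  have ha' : (0:ℝ) < a := ha
  have hb' : (0:ℝ) < b := hb
  have : G b⁻¹ < G a⁻¹ :=
    hG.strictMono (le_of_lt (inv_pos.2 hb')) (le_of_lt (inv_pos.2 ha'))
      (by exact inv_strictAnti₀ ha' hab)
  exact inv_strictAnti₀ (G_pos hG (inv_pos.2 hb')) this

lemma phiTilde_surj {G : ℝ → ℝ} (hG : IsPhiFun G) {x : ℝ} (hx : 0 < x) :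
    ∃ t, 0 < t ∧ phiTilde G t = x := by
  obtain ⟨s, hs, hseq⟩ := G_surj hG (inv_pos.2 hx)
  refine ⟨s⁻¹, inv_pos.2 hs, ?_⟩
  rw [phiTilde_eq (inv_pos.2 hs), inv_inv, hseq, inv_inv]

lemma invFun_phiTilde {G : ℝ → ℝ} (hG : IsPhiFun G) {x : ℝ} (hx : 0 < x) :
    0 < Function.invFun (phiTilde G) x ∧ phiTilde G (Function.invFun (phiTilde G) x) = x := by
  obtain ⟨t, _, ht⟩ := phiTilde_surj hG hx
  have heq : phiTilde G (Function.invFun (phiTilde G) x) = x :=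
    Function.invFun_eq ⟨t, ht⟩
  refine ⟨?_, heq⟩
  by_contra hne
  push_neg at hne
  rw [phiTilde, if_neg (not_lt.2 hne)] at heq
  exact hx.ne heq

section step
variable {u1 u2 v1 v2 : ℝ}

lemma m_calc (h01 : 0 < u1) (h12 : u1 < u2) (h21 : u2 ≤ 1) (hv2 : 0 < v2) (hv : v2 ≤ v1)
    (t : ℝ) :
    (volume {y ∈ Icc (0:ℝ) 1 | t ≤ |(if y ≤ u1 then v1 else if y ≤ u2 then v2 else 0)|}).toReal
      = if t ≤ 0 then 1 else if t ≤ v2 then u2 else if t ≤ v1 then u1 else 0 := by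
  have habs : ∀ y : ℝ, |(if y ≤ u1 then v1 else if y ≤ u2 then v2 else 0)| =
      (if y ≤ u1 then v1 else if y ≤ u2 then v2 else (0:ℝ)) := by
    intro y
    apply abs_of_nonneg
    split_ifs <;> linarith
  simp only [habs]
  by_cases ht0 : t ≤ 0
  · rw [if_pos ht0]
    have : {y ∈ Icc (0:ℝ) 1 | t ≤ (if y ≤ u1 then v1 else if y ≤ u2 then v2 else 0)}
        = Icc (0:ℝ) 1 := by
      ext y
      simp only [mem_setOf_eq, mem_Icc]
      constructor
      · rintro ⟨hy, -⟩; exact hy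
      · intro hy; refine ⟨hy, ?_⟩; split_ifs <;> linarith
    rw [this, Real.volume_Icc, ENNReal.toReal_ofReal] <;> norm_num
  · push_neg at ht0
    rw [if_neg (not_le.2 ht0)]
    by_cases htv2 : t ≤ v2
    · rw [if_pos htv2]
      have : {y ∈ Icc (0:ℝ) 1 | t ≤ (if y ≤ u1 then v1 else if y ≤ u2 then v2 else 0)}
          = Icc (0:ℝ) u2 := by
        ext y
        simp only [mem_setOf_eq, mem_Icc]
        constructor
        · rintro ⟨⟨hy0, hy1⟩, hy⟩
          refine ⟨hy0, ?_⟩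
          by_contra hc
          push_neg at hc
          rw [if_neg (by linarith), if_neg (by linarith)] at hy
          linarith
        · rintro ⟨hy0, hy2⟩
          refine ⟨⟨hy0, by linarith⟩, ?_⟩
          split_ifs <;> linarith
      rw [this, Real.volume_Icc, ENNReal.toReal_ofReal] <;> linarith
    · push_neg at htv2
      rw [if_neg (not_le.2 htv2)]
      by_cases htv1 : t ≤ v1
      · rw [if_pos htv1]
        have : {y ∈ Icc (0:ℝ) 1 | t ≤ (if y ≤ u1 then v1 else if y ≤ u2 then v2 else 0)}
            = Icc (0:ℝ) u1 := by
          ext y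
          simp only [mem_setOf_eq, mem_Icc]
          constructor
          · rintro ⟨⟨hy0, hy1⟩, hy⟩
            refine ⟨hy0, ?_⟩
            by_contra hc
            push_neg at hc
            rw [if_neg (by linarith)] at hy
            split_ifs at hy <;> linarith
          · rintro ⟨hy0, hy1⟩
            refine ⟨⟨hy0, by linarith⟩, ?_⟩
            rw [if_pos hy1]; linarith
        rw [this, Real.volume_Icc, ENNReal.toReal_ofReal] <;> linarith
      · push_neg at htv1
        rw [if_neg (not_le.2 htv1)]
        have : {y ∈ Icc (0:ℝ) 1 | t ≤ (if y ≤ u1 then v1 else if y ≤ u2 then v2 else 0)}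
            = ∅ := by
          ext y
          simp only [mem_setOf_eq, mem_empty_iff_false, iff_false, not_and]
          intro hy hc
          split_ifs at hc <;> linarith
        rw [this]
        simp

lemma decRearr_step1 (h01 : 0 < u1) (h12 : u1 < u2) (h21 : u2 ≤ 1) (hv2 : 0 < v2)
    (hv : v2 ≤ v1) {x : ℝ} (hx0 : 0 < x) (hxu : x ≤ u1) :
    decRearr (fun y => if y ≤ u1 then v1 else if y ≤ u2 then v2 else 0) x = v1 := by
  unfold decRearr
  have hset : {t : ℝ | x ≤ (volume {y ∈ Icc (0:ℝ) 1 |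
      t ≤ |(if y ≤ u1 then v1 else if y ≤ u2 then v2 else 0)|}).toReal} = Iic v1 := by
    ext t
    rw [mem_setOf_eq, m_calc h01 h12 h21 hv2 hv t, mem_Iic]
    split_ifs <;> constructor <;> intro <;> linarith
  rw [hset, csSup_Iic]

lemma decRearr_step2 (h01 : 0 < u1) (h12 : u1 < u2) (h21 : u2 ≤ 1) (hv2 : 0 < v2)
    (hv : v2 ≤ v1) {x : ℝ} (hx0 : u1 < x) (hxu : x ≤ u2) :
    decRearr (fun y => if y ≤ u1 then v1 else if y ≤ u2 then v2 else 0) x = v2 := by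
  unfold decRearr
  have hset : {t : ℝ | x ≤ (volume {y ∈ Icc (0:ℝ) 1 |
      t ≤ |(if y ≤ u1 then v1 else if y ≤ u2 then v2 else 0)|}).toReal} = Iic v2 := by
    ext t
    rw [mem_setOf_eq, m_calc h01 h12 h21 hv2 hv t, mem_Iic]
    split_ifs <;> constructor <;> intro <;> linarith
  rw [hset, csSup_Iic]

lemma decRearr_step3 (h01 : 0 < u1) (h12 : u1 < u2) (h21 : u2 ≤ 1) (hv2 : 0 < v2)
    (hv : v2 ≤ v1) {x : ℝ} (hx0 : u2 < x) (hx1 : x ≤ 1) :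
    decRearr (fun y => if y ≤ u1 then v1 else if y ≤ u2 then v2 else 0) x = 0 := by
  unfold decRearr
  have hset : {t : ℝ | x ≤ (volume {y ∈ Icc (0:ℝ) 1 |
      t ≤ |(if y ≤ u1 then v1 else if y ≤ u2 then v2 else 0)|}).toReal} = Iic 0 := by
    ext t
    rw [mem_setOf_eq, m_calc h01 h12 h21 hv2 hv t, mem_Iic]
    split_ifs <;> constructor <;> intro <;> linarith
  rw [hset, csSup_Iic]

end step

lemma integral_step_piece {F : ℝ → ℝ} {a b c : ℝ} (hab : a ≤ b)
    (h : ∀ x ∈ Ioc a b, F x = c) :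
    ∫ x in Ioc a b, F x = (b - a) * c ∧ IntegrableOn F (Ioc a b) volume := by
  constructor
  · rw [setIntegral_congr_fun measurableSet_Ioc h, setIntegral_const, Real.volume_real_Ioc_of_le hab,
      smul_eq_mul]
  · rw [integrableOn_congr_fun h measurableSet_Ioc]
    exact integrableOn_const (by rw [Real.volume_Ioc]; exact ENNReal.ofReal_ne_top)

lemma integral_three_step {F : ℝ → ℝ} {b1 b2 : ℝ} (hb0 : 0 ≤ b1) (hb1 : b1 ≤ b2)
    (hb2 : b2 ≤ 1) {c1 c2 c3 : ℝ}
    (h1 : ∀ x ∈ Ioc (0:ℝ) b1, F x = c1) (h2 : ∀ x ∈ Ioc b1 b2, F x = c2)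
    (h3 : ∀ x ∈ Ioc b2 1, F x = c3) :
    ∫ x in Icc (0:ℝ) 1, F x = b1 * c1 + (b2 - b1) * c2 + (1 - b2) * c3 := by
  rw [MeasureTheory.integral_Icc_eq_integral_Ioc]
  obtain ⟨e1, i1⟩ := integral_step_piece hb0 h1
  obtain ⟨e2, i2⟩ := integral_step_piece hb1 h2
  obtain ⟨e3, i3⟩ := integral_step_piece hb2 h3
  have hu1 : Ioc (0:ℝ) b1 ∪ Ioc b1 b2 = Ioc 0 b2 := Ioc_union_Ioc_eq_Ioc hb0 hb1
  have hu2 : Ioc (0:ℝ) b2 ∪ Ioc b2 1 = Ioc 0 1 := Ioc_union_Ioc_eq_Ioc (hb0.trans hb1) hb2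
  have d1 : Disjoint (Ioc (0:ℝ) b1) (Ioc b1 b2) := Ioc_disjoint_Ioc_of_le le_rfl
  have d2 : Disjoint (Ioc (0:ℝ) b2) (Ioc b2 1) := Ioc_disjoint_Ioc_of_le le_rfl
  have i12 : IntegrableOn F (Ioc (0:ℝ) b2) volume := by
    rw [← hu1]; exact i1.union i2
  rw [← hu2, setIntegral_union d2 measurableSet_Ioc i12 i3, ← hu1,
    setIntegral_union d1 measurableSet_Ioc i1 i2, e1, e2, e3]
  ring

lemma master {G : ℝ → ℝ} (hG : IsPhiFun G)
    (h : ∀ f : ℝ → ℝ, Measurable f →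
      olNorm (fun t => t) G f = ∫ x in Icc (0:ℝ) 1, |f x|)
    {u1 u2 v1 v2 : ℝ} (h01 : 0 < u1) (h12 : u1 < u2) (h21 : u2 ≤ 1) (hv2 : 0 < v2)
    (hv : v2 ≤ v1) :
    phiTilde G u1 * G (v1 / (u1 * v1 + (u2 - u1) * v2))
      + (phiTilde G u2 - phiTilde G u1) * G (v2 / (u1 * v1 + (u2 - u1) * v2)) = 1 := by
  set N : ℝ := u1 * v1 + (u2 - u1) * v2 with hN
  have hv1 : 0 < v1 := lt_of_lt_of_le hv2 hv
  have hNpos : 0 < N := by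
    rw [hN]
    nlinarith [mul_pos h01 hv1, mul_pos (sub_pos.2 h12) hv2]
  set w1 : ℝ := phiTilde G u1 with hw1
  set w2 : ℝ := phiTilde G u2 with hw2
  have hw1pos : 0 < w1 := phiTilde_pos hG h01
  have h02 : 0 < u2 := h01.trans h12
  have hw12 : w1 < w2 := phiTilde_strictMono hG h01 h02 h12
  have hw21 : w2 ≤ 1 := by
    rw [hw2, phiTilde_eq h02]
    have h1le : (1:ℝ) ≤ u2⁻¹ := one_le_inv_iff₀.2 ⟨h02, h21⟩
    have hGge : (1:ℝ) ≤ G u2⁻¹ := by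
      calc (1:ℝ) = G 1 := hG.one.symm
      _ ≤ G u2⁻¹ := G_mono hG (by norm_num) (le_trans (by norm_num) h1le) h1le
    exact inv_le_one_of_one_le₀ hGge
  set f : ℝ → ℝ := fun y => if y ≤ u1 then v1 else if y ≤ u2 then v2 else 0 with hf
  have hfm : Measurable f := by
    apply Measurable.ite (measurableSet_Iic (a := u1)) measurable_const
    exact Measurable.ite (measurableSet_Iic (a := u2)) measurable_const measurable_const
  have key := h f hfm
  -- compute the RHS integral
  have hRHS : ∫ x in Icc (0:ℝ) 1, |f x| = N := by
    have hint := integral_three_step (F := fun x => |f x|) (b1 := u1) (b2 := u2)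
      h01.le h12.le h21 (c1 := v1) (c2 := v2) (c3 := 0)
      (fun x hx => by
        show |f x| = v1
        rw [hf]
        simp only
        rw [if_pos hx.2]
        exact abs_of_nonneg hv1.le)
      (fun x hx => by
        show |f x| = v2
        rw [hf]
        simp only
        rw [if_neg (not_le.2 hx.1), if_pos hx.2]
        exact abs_of_nonneg hv2.le)
      (fun x hx => by
        show |f x| = 0
        rw [hf]
        simp only
        rw [if_neg (not_le.2 (h12.trans hx.1)), if_neg (not_le.2 hx.1), abs_zero])
    rw [hint, hN]; ring
  have hid : ∀ T : ℝ, 0 < T → phiTilde (fun t : ℝ => t) T = T := by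
    intro T hT
    rw [phiTilde, if_pos hT, inv_inv]
  have hg1 : ∀ x ∈ Ioc (0:ℝ) w1,
      decRearr f (phiTilde (fun t : ℝ => t) (Function.invFun (phiTilde G) x)) = v1 := by
    intro x hx
    obtain ⟨hT, hTeq⟩ := invFun_phiTilde hG hx.1
    rw [hid _ hT, hf]
    apply decRearr_step1 h01 h12 h21 hv2 hv hT
    have hmono := ((phiTilde_strictMono hG).le_iff_le (mem_Ioi.2 hT) (mem_Ioi.2 h01)).1
    rw [hTeq] at hmono
    exact hmono hx.2
  have hg2 : ∀ x ∈ Ioc w1 w2,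
      decRearr f (phiTilde (fun t : ℝ => t) (Function.invFun (phiTilde G) x)) = v2 := by
    intro x hx
    have hx0 : 0 < x := hw1pos.trans hx.1
    obtain ⟨hT, hTeq⟩ := invFun_phiTilde hG hx0
    rw [hid _ hT, hf]
    apply decRearr_step2 h01 h12 h21 hv2 hv
    · have hmono := ((phiTilde_strictMono hG).lt_iff_lt (mem_Ioi.2 h01) (mem_Ioi.2 hT)).1
      rw [hTeq] at hmono
      exact hmono hx.1
    · have hmono := ((phiTilde_strictMono hG).le_iff_le (mem_Ioi.2 hT) (mem_Ioi.2 h02)).1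
      rw [hTeq] at hmono
      exact hmono hx.2
  have hg3 : ∀ x ∈ Ioc w2 1,
      decRearr f (phiTilde (fun t : ℝ => t) (Function.invFun (phiTilde G) x)) = 0 := by
    intro x hx
    have hx0 : 0 < x := (hw1pos.trans hw12).trans hx.1
    obtain ⟨hT, hTeq⟩ := invFun_phiTilde hG hx0
    rw [hid _ hT, hf]
    apply decRearr_step3 h01 h12 h21 hv2 hv
    · have hmono := ((phiTilde_strictMono hG).lt_iff_lt (mem_Ioi.2 h02) (mem_Ioi.2 hT)).1
      rw [hTeq] at hmono
      exact hmono hx.1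
    · have hmono := ((phiTilde_strictMono hG).le_iff_le (mem_Ioi.2 hT) (mem_Ioi.2 one_pos)).1
      rw [hTeq, phiTilde_eq one_pos, inv_one, hG.one, inv_one] at hmono
      exact hmono hx.2
  set Φ : ℝ → ℝ := fun c => w1 * G (v1 / c) + (w2 - w1) * G (v2 / c) with hΦ
  have hint : ∀ c : ℝ, 0 < c →
      (∫ x in Icc (0:ℝ) 1,
        G (|decRearr f (phiTilde (fun t : ℝ => t) (Function.invFun (phiTilde G) x))| / c))
        = Φ c := by
    intro c hc
    have hIS := integral_three_step
      (F := fun x =>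
        G (|decRearr f (phiTilde (fun t : ℝ => t) (Function.invFun (phiTilde G) x))| / c))
      (b1 := w1) (b2 := w2) hw1pos.le hw12.le hw21
      (c1 := G (v1 / c)) (c2 := G (v2 / c)) (c3 := 0)
      (fun x hx => by
        show G (|decRearr f (phiTilde (fun t : ℝ => t) (Function.invFun (phiTilde G) x))| / c)
          = G (v1 / c)
        rw [hg1 x hx, abs_of_nonneg hv1.le])
      (fun x hx => by
        show G (|decRearr f (phiTilde (fun t : ℝ => t) (Function.invFun (phiTilde G) x))| / c)
          = G (v2 / c)
        rw [hg2 x hx, abs_of_nonneg hv2.le])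
      (fun x hx => by
        show G (|decRearr f (phiTilde (fun t : ℝ => t) (Function.invFun (phiTilde G) x))| / c)
          = 0
        rw [hg3 x hx, abs_zero, zero_div, hG.zero])
    rw [hIS, hΦ]
    simp only
    ring
  set S : Set ℝ := {c : ℝ | 0 < c ∧ Φ c ≤ 1} with hS
  have hsInf : sInf S = N := by
    simp only [olNorm, luxNorm] at key
    rw [hRHS] at key
    rw [← key]
    congr 1
    ext c
    simp only [hS, mem_setOf_eq]
    constructor
    · rintro ⟨hc, hc2⟩
      exact ⟨hc, by rw [← hint c hc] at hc2; exact hc2⟩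
    · rintro ⟨hc, hc2⟩
      exact ⟨hc, by rw [hint c hc] at hc2; exact hc2⟩
  have hΦanti : ∀ s c : ℝ, 0 < s → s ≤ c → Φ c ≤ Φ s := by
    intro s c hs hsc
    have hc : 0 < c := hs.trans_le hsc
    have m1 : G (v1 / c) ≤ G (v1 / s) :=
      G_mono hG (mem_Ici.2 (by positivity)) (mem_Ici.2 (by positivity))
        (div_le_div_of_nonneg_left hv1.le hs hsc)
    have m2 : G (v2 / c) ≤ G (v2 / s) :=
      G_mono hG (mem_Ici.2 (by positivity)) (mem_Ici.2 (by positivity))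
        (div_le_div_of_nonneg_left hv2.le hs hsc)
    rw [hΦ]
    simp only
    have hsub := sub_nonneg.2 hw12.le
    nlinarith
  have hΦcont : ContinuousAt Φ N := by
    have hcomp : ∀ v : ℝ, 0 < v → ContinuousAt (fun c => G (v / c)) N := by
      intro v hvpos
      have h1 : ContinuousAt (fun c : ℝ => v / c) N :=
        continuousAt_const.div continuousAt_id hNpos.ne'
      have h2 : ContinuousAt G (v / N) :=
        hG.cont.continuousAt (Ici_mem_nhds (by positivity))
      exact h2.comp h1
    exact ((hcomp v1 hv1).const_mul _).add ((hcomp v2 hv2).const_mul _)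
  have hSbdd : BddBelow S := ⟨0, fun c hc => hc.1.le⟩
  have hSne : S.Nonempty := by
    by_contra hne
    rw [not_nonempty_iff_eq_empty] at hne
    rw [hne, Real.sInf_empty] at hsInf
    exact hNpos.ne hsInf
  have hata : ∀ c : ℝ, N < c → Φ c ≤ 1 := by
    intro c hc
    obtain ⟨s, hsS, hsc⟩ := (csInf_lt_iff hSbdd hSne).1 (by rw [hsInf]; exact hc)
    exact le_trans (hΦanti s c hsS.1 hsc.le) hsS.2
  have hatb : ∀ c : ℝ, 0 < c → c < N → 1 < Φ c := by
    intro c hc hcN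
    by_contra hle
    push_neg at hle
    have hcS : c ∈ S := ⟨hc, hle⟩
    have := csInf_le hSbdd hcS
    rw [hsInf] at this
    linarith
  have hle1 : Φ N ≤ 1 := by
    have ht : Filter.Tendsto Φ (nhdsWithin N (Ioi N)) (nhds (Φ N)) :=
      hΦcont.continuousWithinAt.tendsto
    refine le_of_tendsto ht ?_
    filter_upwards [self_mem_nhdsWithin] with c hc
    exact hata c hc
  have hge1 : 1 ≤ Φ N := by
    have ht : Filter.Tendsto Φ (nhdsWithin N (Iio N)) (nhds (Φ N)) :=
      hΦcont.continuousWithinAt.tendsto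
    refine ge_of_tendsto ht ?_
    have hmem : Ioo (0:ℝ) N ∈ nhdsWithin N (Iio N) :=
      Ioo_mem_nhdsLT_of_mem ⟨hNpos, le_refl N⟩
    filter_upwards [hmem] with c hc
    exact (hatb c hc.1 hc.2).le
  have hfinal : Φ N = 1 := le_antisymm hle1 hge1
  exact hfinal

lemma masterA {G : ℝ → ℝ} (hG : IsPhiFun G)
    (h : ∀ f : ℝ → ℝ, Measurable f →
      olNorm (fun t => t) G f = ∫ x in Icc (0:ℝ) 1, |f x|)
    {u v1 v2 : ℝ} (hu0 : 0 < u) (hu1 : u < 1) (hv2 : 0 < v2) (hv : v2 ≤ v1)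
    (hN : u * v1 + (1 - u) * v2 = 1) :
    (G u⁻¹)⁻¹ * G v1 + (1 - (G u⁻¹)⁻¹) * G v2 = 1 := by
  have E := master hG h hu0 hu1 (le_refl 1) hv2 hv
  rw [hN, div_one, div_one, phiTilde_eq hu0, phiTilde_eq one_pos, inv_one, hG.one,
    inv_one] at E
  exact E

theorem stmt_7 (G : ℝ → ℝ) (hG : IsPhiFun G) (hconv : ConvexOn ℝ (Ici 0) G)
    (h : ∀ f : ℝ → ℝ, Measurable f →
      olNorm (fun t => t) G f = ∫ x in Icc (0:ℝ) 1, |f x|) :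
    ∀ t : ℝ, 0 ≤ t → G t = t := by
  -- G t ≤ t on [0,1] by convexity
  have hle : ∀ a : ℝ, 0 ≤ a → a ≤ 1 → G a ≤ a := by
    intro a ha0 ha1
    have hc := hconv.2 (mem_Ici.2 (zero_le_one)) (mem_Ici.2 (le_refl 0)) ha0
      (by linarith : (0:ℝ) ≤ 1 - a) (by ring)
    simp only [smul_eq_mul, mul_one, mul_zero, add_zero, hG.zero, hG.one] at hc
    linarith
  set γ : ℝ := G 2 with hγ
  have hγ1 : 1 < γ := by
    rw [hγ, ← hG.one]
    exact hG.strictMono (by norm_num) (by norm_num) one_lt_two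
  have hγ0 : 0 < γ := by linarith
  -- G a ≥ a on (0,1)
  have hge : ∀ a : ℝ, 0 < a → a < 1 → a ≤ G a := by
    intro a ha0 ha1
    have hE := masterA hG h (u := 1/2) (v1 := 2 - a) (v2 := a)
      (by norm_num) (by norm_num) ha0 (by linarith) (by ring)
    rw [show ((1:ℝ)/2)⁻¹ = 2 by norm_num] at hE
    -- convexity bound at 2 - a
    have hcx : G (2 - a) ≤ a * 1 + (1 - a) * γ := by
      have hc := hconv.2 (mem_Ici.2 zero_le_one) (mem_Ici.2 (by norm_num : (0:ℝ) ≤ 2))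
        ha0.le (by linarith : (0:ℝ) ≤ 1 - a) (by ring)
      simp only [smul_eq_mul, mul_one, hG.one] at hc
      rw [show (2:ℝ) - a = a + (1 - a) * 2 by ring]
      rw [hγ]
      linarith [hc]
    rw [← hγ] at hE
    have hci : γ * γ⁻¹ = 1 := mul_inv_cancel₀ hγ0.ne'
    have hmm : G (2 - a) + (γ - 1) * G a = γ := by
      have h9 : γ * (γ⁻¹ * G (2 - a) + (1 - γ⁻¹) * G a) = γ * 1 := by rw [hE]
      linear_combination h9 + (G a - G (2 - a)) * hci
    nlinarith [hmm, hcx, hγ1]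
  have hid01 : ∀ a : ℝ, 0 ≤ a → a ≤ 1 → G a = a := by
    intro a ha0 ha1
    rcases eq_or_lt_of_le ha0 with h0 | h0
    · rw [← h0, hG.zero]
    rcases eq_or_lt_of_le ha1 with h1 | h1
    · rw [h1, hG.one]
    exact le_antisymm (hle a ha0 ha1) (hge a h0 h1)
  -- star relation
  have star : ∀ u t : ℝ, 0 < u → u < 1 → 1 < t → u * t < 1 →
      G t = (1 - u * t) / (1 - u) + (1 - (1 - u * t) / (1 - u)) * G u⁻¹ := by
    intro u t hu0 hu1 ht1 hut
    set a : ℝ := (1 - u * t) / (1 - u) with ha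
    have h1u : 0 < 1 - u := by linarith
    have ha0 : 0 < a := div_pos (by linarith) h1u
    have ha1 : a < 1 := by
      rw [ha, div_lt_one h1u]
      nlinarith
    have hE := masterA hG h (u := u) (v1 := t) (v2 := a) hu0 hu1 ha0 (by linarith)
      (by
        rw [ha]
        field_simp
        ring)
    rw [hid01 a ha0.le ha1.le] at hE
    have hGu : 0 < G u⁻¹ := G_pos hG (inv_pos.2 hu0)
    have hinv : (G u⁻¹)⁻¹ * G u⁻¹ = 1 := inv_mul_cancel₀ hGu.ne'
    linear_combination G u⁻¹ * hE + (a - G t) * hinv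
  -- G t = (2 - t) + (t - 1) γ on (1,2)
  have hseg : ∀ t : ℝ, 1 < t → t < 2 → G t = (2 - t) + (t - 1) * γ := by
    intro t ht1 ht2
    have hs := star (1/2) t (by norm_num) (by norm_num) ht1 (by linarith)
    rw [show ((1:ℝ)/2)⁻¹ = 2 by norm_num, ← hγ] at hs
    rw [hs]
    field_simp
    ring
  -- the three-step equation pins γ = 2
  have hγ2 : γ = 2 := by
    have E := master hG h (u1 := 1/2) (u2 := 3/4) (v1 := 2) (v2 := 1)
      (by norm_num) (by norm_num) (by norm_num) (by norm_num) (by norm_num)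
    rw [phiTilde_eq (by norm_num : (0:ℝ) < 1/2), phiTilde_eq (by norm_num : (0:ℝ) < 3/4)] at E
    norm_num at E
    rw [hid01 (4/5) (by norm_num) (by norm_num)] at E
    rw [hseg (8/5) (by norm_num) (by norm_num), hseg (4/3) (by norm_num) (by norm_num)] at E
    rw [← hγ] at E
    have hA : γ * γ⁻¹ = 1 := mul_inv_cancel₀ hγ0.ne'
    have hδ0 : (0:ℝ) < 2 - 4/3 + (4/3 - 1) * γ := by nlinarith
    have hB : (2 - 4/3 + (4/3 - 1) * γ) * (2 - 4/3 + (4/3 - 1) * γ)⁻¹ = 1 :=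
      mul_inv_cancel₀ hδ0.ne'
    have hq : (γ - 1) * (γ - 2) = 0 := by
      linear_combination (-(5*γ*(2+γ))/2) * E + ((2+γ)*(3*γ-2)/2) * hA + (6*γ) * hB
    rcases mul_eq_zero.1 hq with h1 | h2
    · exfalso; linarith
    · linarith
  -- so G t = t on (1,2)
  have hid12 : ∀ t : ℝ, 1 < t → t < 2 → G t = t := by
    intro t ht1 ht2
    rw [hseg t ht1 ht2, hγ2]; ring
  -- G u⁻¹ = u⁻¹ for u < 2/3
  have hbig : ∀ u : ℝ, 0 < u → u < 2/3 → G u⁻¹ = u⁻¹ := by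
    intro u hu0 hu23
    have hs := star u (3/2) hu0 (by linarith) (by norm_num) (by nlinarith)
    rw [hid12 (3/2) (by norm_num) (by norm_num)] at hs
    set a : ℝ := (1 - u * (3/2)) / (1 - u) with ha
    have h1u : 0 < 1 - u := by linarith
    have ha1 : a < 1 := by
      rw [ha, div_lt_one h1u]
      nlinarith
    -- hs : 3/2 = a + (1 - a) * G u⁻¹
    have hane : (1:ℝ) - a ≠ 0 := by linarith
    have hval : a = (1 - u * (3/2)) / (1 - u) := ha
    have : (1 - a) * G u⁻¹ = (1 - a) * u⁻¹ := by
      have h32 : (1 - a) * G u⁻¹ = 3/2 - a := by linarith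
      rw [h32, ha]
      field_simp
      ring
    exact mul_left_cancel₀ hane this
  intro t ht0
  rcases le_or_gt t 1 with ht1 | ht1
  · exact hid01 t ht0 ht1
  rcases lt_or_ge t 2 with ht2 | ht2
  · exact hid12 t ht1 ht2
  · have hu0 : 0 < t⁻¹ := inv_pos.2 (by linarith)
    have hu23 : t⁻¹ < 2/3 := by
      rw [inv_lt_iff_one_lt_mul₀ (by linarith : (0:ℝ) < t)]
      linarith
    have := hbig t⁻¹ hu0 hu23
    rwa [inv_inv] at this
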